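/- Integration by parts identity: for polynomials P₁, P₂ positive on [0,1]ⁿ, c, d ∈ ℂ, and Re(a₁) > 0, one has (a₁+1) ∫_{[0,1]ⁿ} P₁^c P₂^d t₁^{a₁} t₂^{a₂}⋯t_n^{a_n} dt = ∫_{[0,1]^{n-1}} [P₁^c P₂^d t₁^{a₁+1} t₂^{a₂}⋯t_n^{a_n}]_{t₁=0}^{t₁=1} dt₂⋯dt_n − ∫_{[0,1]ⁿ} (c P₁^{c−1} (∂P₁/∂t₁) P₂^d + d P₁^c (∂P₂/∂t₁) P₂^{d−1}) t₁^{a₁+1} t₂^{a₂}⋯t_n^{a_n} dt, provided Re(a_i) > 0 for all i. -/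

import Mathlib

open MeasureTheory MvPolynomial

private theorem hasDerivAt_eval_cons {n : ℕ} (P : MvPolynomial (Fin (n + 1)) ℝ)
    (t' : Fin n → ℝ) (y : ℝ) :
    HasDerivAt (fun x : ℝ => eval (Fin.cons x t') P) (eval (Fin.cons y t') (pderiv 0 P)) y := by
  induction P using MvPolynomial.induction_on with
  | C a => simpa using hasDerivAt_const y a
  | add p q hp hq => simp only [map_add]; exact hp.add hq
  | mul_X p i hp =>
    induction i using Fin.cases with
    | zero =>
      have h := hp.mul (hasDerivAt_id y)
      simp only [map_mul, eval_X, Fin.cons_zero, pderiv_mul, pderiv_X_self, map_one, map_add,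
        mul_one, id] at h ⊢
      exact h
    | succ j =>
      have h := hp.mul_const (t' j)
      have hne : j.succ ≠ (0 : Fin (n + 1)) := Fin.succ_ne_zero j
      simp only [map_mul, eval_X, Fin.cons_succ, pderiv_mul, map_add,
        pderiv_X_of_ne hne, map_zero, mul_zero, add_zero] at h ⊢
      exact h

private theorem ibp_one_dim (f₁ f₂ g₁ g₂ : ℝ → ℝ)
    (hd₁ : ∀ t, HasDerivAt f₁ (g₁ t) t) (hd₂ : ∀ t, HasDerivAt f₂ (g₂ t) t)
    (hgc₁ : Continuous g₁) (hgc₂ : Continuous g₂)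
    (hp₁ : ∀ t ∈ Set.Icc (0 : ℝ) 1, 0 < f₁ t) (hp₂ : ∀ t ∈ Set.Icc (0 : ℝ) 1, 0 < f₂ t)
    (c d a₀ : ℂ) (ha : 0 < a₀.re) :
    (a₀ + 1) * ∫ t in Set.Icc (0 : ℝ) 1, ((f₁ t : ℂ) ^ c * (f₂ t : ℂ) ^ d * (t : ℂ) ^ a₀) =
      ((f₁ 1 : ℂ) ^ c * (f₂ 1 : ℂ) ^ d * (1 : ℂ) ^ (a₀ + 1) -
        (f₁ 0 : ℂ) ^ c * (f₂ 0 : ℂ) ^ d * (0 : ℂ) ^ (a₀ + 1)) -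
      ∫ t in Set.Icc (0 : ℝ) 1,
        (c * (f₁ t : ℂ) ^ (c - 1) * (g₁ t : ℂ) * (f₂ t : ℂ) ^ d +
          d * (f₁ t : ℂ) ^ c * (g₂ t : ℂ) * (f₂ t : ℂ) ^ (d - 1)) * (t : ℂ) ^ (a₀ + 1) := by
  have ha1 : 0 < (a₀ + 1).re := by
    simp only [Complex.add_re, Complex.one_re]; linarith
  set F : ℝ → ℂ := fun t => (f₁ t : ℂ) ^ c * (f₂ t : ℂ) ^ d * (t : ℂ) ^ (a₀ + 1) with hF
  set S : ℝ → ℂ := fun t =>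
    (c * (f₁ t : ℂ) ^ (c - 1) * (g₁ t : ℂ) * (f₂ t : ℂ) ^ d +
      d * (f₁ t : ℂ) ^ c * (g₂ t : ℂ) * (f₂ t : ℂ) ^ (d - 1)) * (t : ℂ) ^ (a₀ + 1) with hS
  set Bs : ℝ → ℂ := fun t => (f₁ t : ℂ) ^ c * (f₂ t : ℂ) ^ d * (t : ℂ) ^ a₀ with hBs
  have c₁ : ∀ e : ℂ, ContinuousOn (fun t : ℝ => (f₁ t : ℂ) ^ e) (Set.Icc 0 1) := fun e x hx =>
    ((Complex.continuousAt_ofReal_cpow_const (f₁ x) e (Or.inr (hp₁ x hx).ne')).comp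
      (hd₁ x).continuousAt).continuousWithinAt
  have c₂ : ∀ e : ℂ, ContinuousOn (fun t : ℝ => (f₂ t : ℂ) ^ e) (Set.Icc 0 1) := fun e x hx =>
    ((Complex.continuousAt_ofReal_cpow_const (f₂ x) e (Or.inr (hp₂ x hx).ne')).comp
      (hd₂ x).continuousAt).continuousWithinAt
  have ct : ∀ e : ℂ, 0 < e.re → ContinuousOn (fun t : ℝ => (t : ℂ) ^ e) (Set.Icc 0 1) :=
    fun e he x _ => (Complex.continuousAt_ofReal_cpow_const x e (Or.inl he)).continuousWithinAt
  have hCB : ContinuousOn Bs (Set.Icc 0 1) := ((c₁ c).mul (c₂ d)).mul (ct a₀ ha)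
  have hCS : ContinuousOn S (Set.Icc 0 1) := by
    refine ContinuousOn.mul (ContinuousOn.add ?_ ?_) (ct _ ha1)
    · exact ((continuousOn_const.mul (c₁ (c - 1))).mul
        ((Complex.continuous_ofReal.comp hgc₁).continuousOn)).mul (c₂ d)
    · exact ((continuousOn_const.mul (c₁ c)).mul
        ((Complex.continuous_ofReal.comp hgc₂).continuousOn)).mul (c₂ (d - 1))
  have hCF : ContinuousOn F (Set.Icc 0 1) := ((c₁ c).mul (c₂ d)).mul (ct _ ha1)
  have hderiv : ∀ t ∈ Set.Ioo (0 : ℝ) 1, HasDerivAt F (S t + (a₀ + 1) * Bs t) t := by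
    intro t ht
    have h1 : HasDerivAt (fun t : ℝ => (f₁ t : ℂ) ^ c)
        ((c * (f₁ t : ℂ) ^ (c - 1) * 1) * (g₁ t : ℂ)) t := by
      have hz : HasDerivAt (fun z : ℂ => z ^ c) (c * ((f₁ t : ℂ)) ^ (c - 1) * 1) ((f₁ t : ℂ)) :=
        (hasDerivAt_id _).cpow_const
          (Complex.ofReal_mem_slitPlane.2 (hp₁ t (Set.mem_Icc_of_Ioo ht)))
      exact hz.comp t ((hd₁ t).ofReal_comp)
    have h2 : HasDerivAt (fun t : ℝ => (f₂ t : ℂ) ^ d)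
        ((d * (f₂ t : ℂ) ^ (d - 1) * 1) * (g₂ t : ℂ)) t := by
      have hz : HasDerivAt (fun z : ℂ => z ^ d) (d * ((f₂ t : ℂ)) ^ (d - 1) * 1) ((f₂ t : ℂ)) :=
        (hasDerivAt_id _).cpow_const
          (Complex.ofReal_mem_slitPlane.2 (hp₂ t (Set.mem_Icc_of_Ioo ht)))
      exact hz.comp t ((hd₂ t).ofReal_comp)
    have h3 : HasDerivAt (fun t : ℝ => (t : ℂ) ^ (a₀ + 1))
        ((a₀ + 1) * (t : ℂ) ^ (a₀ + 1 - 1) * 1) t := by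
      have hz : HasDerivAt (fun z : ℂ => z ^ (a₀ + 1))
          ((a₀ + 1) * (t : ℂ) ^ (a₀ + 1 - 1) * 1) ((t : ℝ) : ℂ) :=
        (hasDerivAt_id _).cpow_const (Complex.ofReal_mem_slitPlane.2 ht.1)
      exact hz.comp_ofReal
    have h := (h1.mul h2).mul h3
    rw [add_sub_cancel_right] at h
    refine h.congr_deriv ?_
    simp only [hS, hBs, Pi.mul_apply]
    ring
  have hint : IntervalIntegrable (fun t => S t + (a₀ + 1) * Bs t) volume 0 1 :=
    (hCS.add (continuousOn_const.mul hCB)).intervalIntegrable_of_Icc zero_le_one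
  have key : ∫ t in (0:ℝ)..1, (S t + (a₀ + 1) * Bs t) = F 1 - F 0 :=
    intervalIntegral.integral_eq_sub_of_hasDerivAt_of_le zero_le_one hCF hderiv hint
  rw [intervalIntegral.integral_of_le zero_le_one, ← MeasureTheory.integral_Icc_eq_integral_Ioc,
    MeasureTheory.integral_add (hCS.integrableOn_compact isCompact_Icc)
      ((hCB.integrableOn_compact isCompact_Icc).const_mul _),
    MeasureTheory.integral_const_mul] at key
  simp only [hF, Complex.ofReal_one, Complex.ofReal_zero] at key
  linear_combination key

private theorem restrict_Icc_pi (m : ℕ) :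
    (volume : Measure (Fin m → ℝ)).restrict (Set.Icc 0 1)
      = Measure.pi fun _ : Fin m => (volume : Measure ℝ).restrict (Set.Icc 0 1) := by
  refine (Measure.pi_eq fun s hs => ?_).symm
  have h01 : Set.Icc (0 : Fin m → ℝ) 1 = Set.univ.pi fun i : Fin m => Set.Icc (0 : ℝ) 1 := by
    rw [← Set.pi_univ_Icc]; rfl
  rw [h01, Measure.restrict_apply (MeasurableSet.univ_pi hs), ← Set.pi_inter_distrib,
    volume_pi_pi]
  simp_rw [Measure.restrict_apply (hs _)]

private theorem box_integral_cons {n : ℕ} (f : (Fin (n + 1) → ℝ) → ℂ)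
    (hf : IntegrableOn f (Set.Icc 0 1)) :
    ((∫ t in Set.Icc (0 : Fin (n + 1) → ℝ) 1, f t)
        = ∫ t' in Set.Icc (0 : Fin n → ℝ) 1, ∫ t₀ in Set.Icc (0 : ℝ) 1, f (Fin.cons t₀ t')) ∧
      Integrable (fun t' : Fin n → ℝ => ∫ t₀ in Set.Icc (0 : ℝ) 1, f (Fin.cons t₀ t'))
        ((volume : Measure (Fin n → ℝ)).restrict (Set.Icc 0 1)) := by
  set μ : Measure ℝ := volume.restrict (Set.Icc 0 1) with hμ
  have MP := measurePreserving_piFinSuccAbove (fun _ : Fin (n + 1) => μ) 0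
  set e := MeasurableEquiv.piFinSuccAbove (fun _ : Fin (n + 1) => ℝ) 0 with he
  have hfe : ∀ p : ℝ × (Fin n → ℝ), f (e.symm p) = f (Fin.cons p.1 p.2) := by
    intro p
    congr 1
    simp [he, MeasurableEquiv.piFinSuccAbove_symm_apply, Fin.insertNthEquiv, Fin.insertNth_zero]
  have hint : Integrable (fun p : ℝ × (Fin n → ℝ) => f (Fin.cons p.1 p.2))
      (μ.prod (Measure.pi fun _ : Fin n => μ)) := by
    have MPs := MeasureTheory.MeasurePreserving.symm e MP
    have h := MPs.integrable_comp_emb (MeasurableEquiv.measurableEmbedding e.symm) (g := f)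
    have h2 : Integrable f (Measure.pi fun _ : Fin (n + 1) => μ) := by
      rw [← restrict_Icc_pi]; exact hf
    have := h.2 h2
    simp only [Function.comp_def, hfe] at this
    exact this
  constructor
  · rw [show (volume : Measure (Fin (n + 1) → ℝ)).restrict (Set.Icc 0 1)
        = Measure.pi fun _ : Fin (n + 1) => μ from restrict_Icc_pi (n + 1),
      ← (MeasureTheory.MeasurePreserving.symm e MP).integral_comp' f]
    simp_rw [hfe]
    rw [MeasureTheory.integral_prod_symm _ hint,
      show Measure.pi (fun _ : Fin n => μ)
        = (volume : Measure (Fin n → ℝ)).restrict (Set.Icc 0 1) from (restrict_Icc_pi n).symm]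
  · rw [show (volume : Measure (Fin n → ℝ)).restrict (Set.Icc 0 1)
        = Measure.pi fun _ : Fin n => μ from restrict_Icc_pi n]
    exact hint.integral_prod_right

/-- Integration by parts in the first variable `t₀` for
`∫_{[0,1]^{n+1}} P₁^c P₂^d ∏ tᵢ^{aᵢ}`: `(a₀+1)` times the integral equals the boundary
term minus the integral of
`(c P₁^{c-1} ∂₀P₁ P₂^d + d P₁^c ∂₀P₂ P₂^{d-1}) t₀^{a₀+1} ∏_{i≥1} tᵢ^{aᵢ}`. -/
theorem integration_by_parts_box (n : ℕ) (P₁ P₂ : MvPolynomial (Fin (n + 1)) ℝ)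
    (h1 : ∀ t ∈ Set.Icc (0 : Fin (n + 1) → ℝ) 1, 0 < eval t P₁)
    (h2 : ∀ t ∈ Set.Icc (0 : Fin (n + 1) → ℝ) 1, 0 < eval t P₂)
    (c d : ℂ) (a : Fin (n + 1) → ℂ) (ha : ∀ i, 0 < (a i).re) :
    (a 0 + 1) * ∫ t in Set.Icc (0 : Fin (n + 1) → ℝ) 1,
        ((eval t P₁ : ℝ) : ℂ) ^ c * ((eval t P₂ : ℝ) : ℂ) ^ d *
          ∏ i, (t i : ℂ) ^ (a i) =
      (∫ t' in Set.Icc (0 : Fin n → ℝ) 1,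
        (((eval (Fin.cons 1 t') P₁ : ℝ) : ℂ) ^ c * ((eval (Fin.cons 1 t') P₂ : ℝ) : ℂ) ^ d *
            ((1 : ℂ) ^ (a 0 + 1)) * ∏ i : Fin n, (t' i : ℂ) ^ (a i.succ) -
          ((eval (Fin.cons 0 t') P₁ : ℝ) : ℂ) ^ c * ((eval (Fin.cons 0 t') P₂ : ℝ) : ℂ) ^ d *
            ((0 : ℂ) ^ (a 0 + 1)) * ∏ i : Fin n, (t' i : ℂ) ^ (a i.succ))) -
      ∫ t in Set.Icc (0 : Fin (n + 1) → ℝ) 1,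
        (c * ((eval t P₁ : ℝ) : ℂ) ^ (c - 1) * ((eval t (pderiv 0 P₁) : ℝ) : ℂ) *
            ((eval t P₂ : ℝ) : ℂ) ^ d +
          d * ((eval t P₁ : ℝ) : ℂ) ^ c * ((eval t (pderiv 0 P₂) : ℝ) : ℂ) *
            ((eval t P₂ : ℝ) : ℂ) ^ (d - 1)) *
          (t 0 : ℂ) ^ (a 0 + 1) * ∏ i : Fin n, (t i.succ : ℂ) ^ (a i.succ) := by
  have ha1 : 0 < (a 0 + 1).re := by
    simp only [Complex.add_re, Complex.one_re]; linarith [ha 0]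
  -- membership of cons in the box
  have hconsmem : ∀ x ∈ Set.Icc (0 : ℝ) 1, ∀ t' ∈ Set.Icc (0 : Fin n → ℝ) 1,
      Fin.cons x t' ∈ Set.Icc (0 : Fin (n + 1) → ℝ) 1 := by
    intro x hx t' ht'
    simp only [Set.mem_Icc, Pi.le_def, Pi.zero_apply, Pi.one_apply] at hx ht' ⊢
    refine ⟨fun i => ?_, fun i => ?_⟩ <;>
      induction i using Fin.cases <;>
      simp [Fin.cons_zero, Fin.cons_succ, hx.1, hx.2, ht'.1 _, ht'.2 _]
  -- continuity of cons maps
  have hcons_t : ∀ t' : Fin n → ℝ, Continuous fun x : ℝ => (Fin.cons x t' : Fin (n + 1) → ℝ) := by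
    intro t'
    apply continuous_pi; intro i
    induction i using Fin.cases with
    | zero => simpa using continuous_id'
    | succ j => simpa using continuous_const
  have hcons_b : ∀ x : ℝ, Continuous fun t' : Fin n → ℝ => (Fin.cons x t' : Fin (n + 1) → ℝ) := by
    intro x
    apply continuous_pi; intro i
    induction i using Fin.cases with
    | zero => simpa using continuous_const
    | succ j => simpa using continuous_apply j
  -- continuity of the box integrands
  have hcpow1 : ∀ e : ℂ,
      ContinuousOn (fun t : Fin (n + 1) → ℝ => ((eval t P₁ : ℝ) : ℂ) ^ e) (Set.Icc 0 1) :=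
    fun e x hx => by
    have hev : ContinuousAt (fun t : Fin (n + 1) → ℝ => eval t P₁) x :=
      P₁.continuous_eval.continuousAt
    exact ((Complex.continuousAt_ofReal_cpow_const _ e (Or.inr (h1 x hx).ne')).comp (x := x) hev).continuousWithinAt
  have hcpow2 : ∀ e : ℂ,
      ContinuousOn (fun t : Fin (n + 1) → ℝ => ((eval t P₂ : ℝ) : ℂ) ^ e) (Set.Icc 0 1) :=
    fun e x hx => by
    have hev : ContinuousAt (fun t : Fin (n + 1) → ℝ => eval t P₂) x :=
      P₂.continuous_eval.continuousAt
    exact ((Complex.continuousAt_ofReal_cpow_const _ e (Or.inr (h2 x hx).ne')).comp (x := x) hev).continuousWithinAt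
  have hcoord : ∀ (i : Fin (n + 1)) (e : ℂ), 0 < e.re →
      ContinuousOn (fun t : Fin (n + 1) → ℝ => ((t i : ℝ) : ℂ) ^ e) (Set.Icc 0 1) :=
    fun i e he x _ => by
    have hev : ContinuousAt (fun t : Fin (n + 1) → ℝ => t i) x :=
      (continuous_apply i).continuousAt
    exact ((Complex.continuousAt_ofReal_cpow_const (x i) e (Or.inl he)).comp (x := x) hev).continuousWithinAt
  have hBase_cont : ContinuousOn (fun t : Fin (n + 1) → ℝ =>
      ((eval t P₁ : ℝ) : ℂ) ^ c * ((eval t P₂ : ℝ) : ℂ) ^ d * ∏ i, ((t i : ℝ) : ℂ) ^ (a i))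
      (Set.Icc 0 1) :=
    ((hcpow1 c).mul (hcpow2 d)).mul
      (continuousOn_finset_prod _ fun i _ => hcoord i (a i) (ha i))
  have hS_cont : ContinuousOn (fun t : Fin (n + 1) → ℝ =>
      (c * ((eval t P₁ : ℝ) : ℂ) ^ (c - 1) * ((eval t (pderiv 0 P₁) : ℝ) : ℂ) *
          ((eval t P₂ : ℝ) : ℂ) ^ d +
        d * ((eval t P₁ : ℝ) : ℂ) ^ c * ((eval t (pderiv 0 P₂) : ℝ) : ℂ) *
          ((eval t P₂ : ℝ) : ℂ) ^ (d - 1)) *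
        ((t 0 : ℝ) : ℂ) ^ (a 0 + 1) * ∏ i : Fin n, ((t i.succ : ℝ) : ℂ) ^ (a i.succ))
      (Set.Icc 0 1) := by
    refine ContinuousOn.mul (ContinuousOn.mul (ContinuousOn.add ?_ ?_) (hcoord 0 _ ha1)) ?_
    · exact ((continuousOn_const.mul (hcpow1 (c - 1))).mul
        ((Complex.continuous_ofReal.comp (pderiv 0 P₁).continuous_eval).continuousOn)).mul
        (hcpow2 d)
    · exact ((continuousOn_const.mul (hcpow1 c)).mul
        ((Complex.continuous_ofReal.comp (pderiv 0 P₂).continuous_eval).continuousOn)).mul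
        (hcpow2 (d - 1))
    · exact continuousOn_finset_prod _ fun i _ => hcoord i.succ (a i.succ) (ha i.succ)
  -- continuity / integrability of the boundary integrand
  have hBd_cont : ContinuousOn (fun t' : Fin n → ℝ =>
      ((eval (Fin.cons 1 t') P₁ : ℝ) : ℂ) ^ c * ((eval (Fin.cons 1 t') P₂ : ℝ) : ℂ) ^ d *
          ((1 : ℂ) ^ (a 0 + 1)) * ∏ i : Fin n, ((t' i : ℝ) : ℂ) ^ (a i.succ) -
        ((eval (Fin.cons 0 t') P₁ : ℝ) : ℂ) ^ c * ((eval (Fin.cons 0 t') P₂ : ℝ) : ℂ) ^ d *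
          ((0 : ℂ) ^ (a 0 + 1)) * ∏ i : Fin n, ((t' i : ℝ) : ℂ) ^ (a i.succ))
      (Set.Icc 0 1) := by
    have hprod : ContinuousOn (fun t' : Fin n → ℝ => ∏ i : Fin n, ((t' i : ℝ) : ℂ) ^ (a i.succ))
        (Set.Icc (0 : Fin n → ℝ) 1) := by
      refine continuousOn_finset_prod _ fun i _ => fun x hx => ?_
      have hev : ContinuousAt (fun t : Fin n → ℝ => t i) x := (continuous_apply i).continuousAt
      exact ((Complex.continuousAt_ofReal_cpow_const (x i) _ (Or.inl (ha i.succ))).comp (x := x) hev).continuousWithinAt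
    have hb : ∀ x ∈ Set.Icc (0 : ℝ) 1, ∀ (P : MvPolynomial (Fin (n + 1)) ℝ),
        (∀ t ∈ Set.Icc (0 : Fin (n + 1) → ℝ) 1, 0 < eval t P) → ∀ e : ℂ,
        ContinuousOn (fun t' : Fin n → ℝ => ((eval (Fin.cons x t') P : ℝ) : ℂ) ^ e)
          (Set.Icc 0 1) := by
      intro x hx P hP e y hy
      have hev : ContinuousAt (fun t' : Fin n → ℝ => eval (Fin.cons x t') P) y :=
        (P.continuous_eval.comp (hcons_b x)).continuousAt
      exact ((Complex.continuousAt_ofReal_cpow_const _ e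
        (Or.inr (hP _ (hconsmem x hx y hy)).ne')).comp (x := y) hev).continuousWithinAt
    have h01 : (1 : ℝ) ∈ Set.Icc (0 : ℝ) 1 := by norm_num
    have h00 : (0 : ℝ) ∈ Set.Icc (0 : ℝ) 1 := by norm_num
    exact ((((hb 1 h01 P₁ h1 c).mul (hb 1 h01 P₂ h2 d)).mul continuousOn_const).mul hprod).sub
      ((((hb 0 h00 P₁ h1 c).mul (hb 0 h00 P₂ h2 d)).mul continuousOn_const).mul hprod)
  have hBd_int := hBd_cont.integrableOn_compact (μ := volume) isCompact_Icc
  have hB := box_integral_cons _ (hBase_cont.integrableOn_compact isCompact_Icc)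
  have hS := box_integral_cons _ (hS_cont.integrableOn_compact isCompact_Icc)
  rw [hB.1, hS.1, ← MeasureTheory.integral_const_mul,
    ← MeasureTheory.integral_sub hBd_int hS.2]
  refine MeasureTheory.setIntegral_congr_fun measurableSet_Icc fun t' ht' => ?_
  have key := ibp_one_dim (fun x => eval (Fin.cons x t') P₁) (fun x => eval (Fin.cons x t') P₂)
    (fun x => eval (Fin.cons x t') (pderiv 0 P₁)) (fun x => eval (Fin.cons x t') (pderiv 0 P₂))
    (fun x => hasDerivAt_eval_cons P₁ t' x) (fun x => hasDerivAt_eval_cons P₂ t' x)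
    ((pderiv 0 P₁).continuous_eval.comp (hcons_t t'))
    ((pderiv 0 P₂).continuous_eval.comp (hcons_t t'))
    (fun x hx => h1 _ (hconsmem x hx t' ht')) (fun x hx => h2 _ (hconsmem x hx t' ht'))
    c d (a 0) (ha 0)
  have e1 : (∫ t₀ in Set.Icc (0 : ℝ) 1,
        ((eval (Fin.cons t₀ t') P₁ : ℝ) : ℂ) ^ c * ((eval (Fin.cons t₀ t') P₂ : ℝ) : ℂ) ^ d *
          ∏ i : Fin (n + 1), (((Fin.cons t₀ t' : Fin (n + 1) → ℝ) i : ℝ) : ℂ) ^ (a i))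
      = (∫ t₀ in Set.Icc (0 : ℝ) 1,
          ((eval (Fin.cons t₀ t') P₁ : ℝ) : ℂ) ^ c * ((eval (Fin.cons t₀ t') P₂ : ℝ) : ℂ) ^ d *
            ((t₀ : ℝ) : ℂ) ^ (a 0)) * ∏ i : Fin n, ((t' i : ℝ) : ℂ) ^ (a i.succ) := by
    rw [← MeasureTheory.integral_mul_const]
    refine MeasureTheory.setIntegral_congr_fun measurableSet_Icc fun x _ => ?_
    simp only [Fin.prod_univ_succ, Fin.cons_zero, Fin.cons_succ]
    ring
  have e2 : (∫ t₀ in Set.Icc (0 : ℝ) 1,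
        (c * ((eval (Fin.cons t₀ t') P₁ : ℝ) : ℂ) ^ (c - 1) *
            ((eval (Fin.cons t₀ t') (pderiv 0 P₁) : ℝ) : ℂ) *
            ((eval (Fin.cons t₀ t') P₂ : ℝ) : ℂ) ^ d +
          d * ((eval (Fin.cons t₀ t') P₁ : ℝ) : ℂ) ^ c *
            ((eval (Fin.cons t₀ t') (pderiv 0 P₂) : ℝ) : ℂ) *
            ((eval (Fin.cons t₀ t') P₂ : ℝ) : ℂ) ^ (d - 1)) *
          (((Fin.cons t₀ t' : Fin (n + 1) → ℝ) 0 : ℝ) : ℂ) ^ (a 0 + 1) *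
          ∏ i : Fin n, (((Fin.cons t₀ t' : Fin (n + 1) → ℝ) i.succ : ℝ) : ℂ) ^ (a i.succ))
      = (∫ t₀ in Set.Icc (0 : ℝ) 1,
          (c * ((eval (Fin.cons t₀ t') P₁ : ℝ) : ℂ) ^ (c - 1) *
              ((eval (Fin.cons t₀ t') (pderiv 0 P₁) : ℝ) : ℂ) *
              ((eval (Fin.cons t₀ t') P₂ : ℝ) : ℂ) ^ d +
            d * ((eval (Fin.cons t₀ t') P₁ : ℝ) : ℂ) ^ c *
              ((eval (Fin.cons t₀ t') (pderiv 0 P₂) : ℝ) : ℂ) *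
              ((eval (Fin.cons t₀ t') P₂ : ℝ) : ℂ) ^ (d - 1)) * ((t₀ : ℝ) : ℂ) ^ (a 0 + 1))
          * ∏ i : Fin n, ((t' i : ℝ) : ℂ) ^ (a i.succ) := by
    rw [← MeasureTheory.integral_mul_const]
    refine MeasureTheory.setIntegral_congr_fun measurableSet_Icc fun x _ => ?_
    simp only [Fin.cons_zero, Fin.cons_succ]
  rw [e1, e2]
  linear_combination (∏ i : Fin n, ((t' i : ℝ) : ℂ) ^ (a i.succ)) * key
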